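/- Every p-coloring automorphism of ℤ/p (p an odd prime) is of the form f(x) = λx + μ for some unit λ and some μ in ℤ/p; that is, any bijection f : ℤ/p → ℤ/p satisfying f(2b - a) = 2f(b) - f(a) for all a, b is an affine map x ↦ λx + μ with λ invertible. -/
import Mathlib


theorem stmt_1 (p : ℕ) (hp : p.Prime) (hodd : Odd p)
    (f : ZMod p → ZMod p) (hbij : Function.Bijective f)
    (hcol : ∀ a b : ZMod p, f (2 * b - a) = 2 * f b - f a) :
    ∃ (l : (ZMod p)ˣ) (m : ZMod p), ∀ x, f x = (l : ZMod p) * x + m := by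
  haveI : Fact p.Prime := ⟨hp⟩
  have hp2 : p ≠ 2 := by rintro rfl; simp [Nat.odd_iff] at hodd
  have hdvd : ¬ p ∣ 2 := fun h => hp2 ((Nat.prime_dvd_prime_iff_eq hp Nat.prime_two).mp h)
  have h2 : (2 : ZMod p) ≠ 0 := by
    rw [show (2 : ZMod p) = ((2 : ℕ) : ZMod p) by norm_num, Ne,
      ZMod.natCast_eq_zero_iff]
    exact hdvd
  set g : ZMod p → ZMod p := fun x => f x - f 0 with hg
  have hadd : ∀ x y, g (x + y) = g x + g y := by
    intro x y
    have hb : 2 * ((2 : ZMod p)⁻¹ * (x + y)) = x + y := by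
      rw [← mul_assoc, mul_inv_cancel₀ h2, one_mul]
    have h1 := hcol y ((2 : ZMod p)⁻¹ * (x + y))
    rw [hb] at h1
    have h2' := hcol 0 ((2 : ZMod p)⁻¹ * (x + y))
    rw [hb] at h2'
    simp only [hg]
    have : f (x + y - y) = 2 * f ((2 : ZMod p)⁻¹ * (x + y)) - f y := h1
    rw [add_sub_cancel_right] at this
    have h3 : f (x + y) = 2 * f ((2 : ZMod p)⁻¹ * (x + y)) - f 0 := by
      simpa using h2'
    rw [h3, this]
    ring
  have hlin : ∀ x, g x = g 1 * x := by
    have hn : ∀ n : ℕ, g n = g 1 * n := by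
      intro n
      induction n with
      | zero => simp [hg]
      | succ n ih =>
        push_cast
        rw [hadd n 1, ih]
        ring
    intro x
    have := hn x.val
    rwa [ZMod.natCast_val, ZMod.cast_id] at this
  have hne : g 1 ≠ 0 := by
    intro h
    have : f 1 = f 0 := by
      have := h
      simp only [hg, sub_eq_zero] at this
      exact this
    have h10 : (1 : ZMod p) = 0 := hbij.1 this
    exact one_ne_zero h10
  refine ⟨Units.mk0 (g 1) hne, f 0, fun x => ?_⟩
  have := hlin x
  simp only [hg] at this
  simp only [Units.val_mk0]
  linear_combination this
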